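/- Let L̂ be a real symmetric positive semidefinite N×N matrix. Then the heat kernel exp(-p • L̂) converges entrywise as p → ∞; moreover its limit is the matrix of the orthogonal projection of ℝ^N (with the standard inner product) onto the kernel of L̂. Consequently, for every pair of indices (u,v), the function p ↦ exp(-p • L̂)(u,v) has a finite limit as p → ∞ (the 'stable' heat kernel value used by the attention mechanism). -/

import Mathlib

open NormedSpace
open scoped Matrix

/-- For a real symmetric positive semidefinite `L̂`, the heat kernel `exp (-p • L̂)`
converges entrywise as `p → ∞` to the matrix of the orthogonal projection of
Euclidean space onto the kernel of `L̂`; in particular every entry has a finite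
limit (the "stable" heat kernel value). -/
theorem heat_kernel_tendsto_kernel_projection
    (N : ℕ) (Lhat : Matrix (Fin N) (Fin N) ℝ) (hsymm : Lhat.IsSymm)
    (hpsd : ∀ x : Fin N → ℝ, 0 ≤ x ⬝ᵥ Lhat.mulVec x) :
    (∀ u v : Fin N,
      Filter.Tendsto (fun p : ℝ => exp ((-p) • Lhat) u v) Filter.atTop
        (nhds (Matrix.toEuclideanLin.symm
          (((LinearMap.ker (Matrix.toEuclideanLin Lhat)).subtypeL.comp
            (Submodule.orthogonalProjectionOnto
              (LinearMap.ker (Matrix.toEuclideanLin Lhat)))).toLinearMap)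
          u v))) ∧
    (∀ u v : Fin N, ∃ c : ℝ,
      Filter.Tendsto (fun p : ℝ => exp ((-p) • Lhat) u v) Filter.atTop (nhds c)) := by
  classical
  have hH : Lhat.IsHermitian := hsymm
  have hPSD : Lhat.PosSemidef := Matrix.PosSemidef.of_dotProduct_mulVec_nonneg hH (fun x => by simpa using hpsd x)
  set U : Matrix (Fin N) (Fin N) ℝ := (hH.eigenvectorUnitary : Matrix (Fin N) (Fin N) ℝ) with hUdef
  set μ : Fin N → ℝ := hH.eigenvalues with hμdef
  have hμ0 : ∀ k, 0 ≤ μ k := fun k => hPSD.eigenvalues_nonneg k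
  set χ : Fin N → ℝ := fun k => if μ k = 0 then 1 else 0 with hχdef
  set Q : Matrix (Fin N) (Fin N) ℝ := U * Matrix.diagonal χ * star U with hQdef
  have hUU : star U * U = 1 := Unitary.coe_star_mul_self _
  have hUU' : U * star U = 1 := Unitary.coe_mul_star_self _
  have hspec : Lhat = U * Matrix.diagonal μ * star U := by
    have := hH.spectral_theorem
    simpa using this
  -- exponential formula
  have hexp : ∀ p : ℝ, exp ((-p) • Lhat)
      = U * Matrix.diagonal (fun k => Real.exp (-p * μ k)) * star U := by
    intro p
    have hsmul : (-p) • Lhat = U * Matrix.diagonal (fun k => -p * μ k) * star U := by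
      rw [hspec, ← Matrix.smul_mul, ← Matrix.mul_smul]
      congr 2
      funext i j
      by_cases h : i = j <;> simp [Matrix.diagonal, h]
    let Uu : (Matrix (Fin N) (Fin N) ℝ)ˣ := ⟨U, star U, hUU', hUU⟩
    have hconj := Matrix.exp_units_conj Uu (Matrix.diagonal (fun k => -p * μ k))
    have hinv : ((Uu⁻¹ : (Matrix (Fin N) (Fin N) ℝ)ˣ) : Matrix (Fin N) (Fin N) ℝ) = star U := rfl
    rw [hsmul]
    have : (Uu : Matrix (Fin N) (Fin N) ℝ) = U := rfl
    have hd : exp (fun k => -p * μ k) = fun k => Real.exp (-p * μ k) := by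
      rw [Pi.exp_def]
      funext k
      rw [Real.exp_eq_exp_ℝ]
    rw [← this, ← hinv, hconj, Matrix.exp_diagonal, hd]
  -- entry formula for conjugated diagonal matrices
  have hentry : ∀ (d : Fin N → ℝ) (u v : Fin N),
      (U * Matrix.diagonal d * star U) u v = ∑ k, U u k * d k * U v k := by
    intro d u v
    rw [Matrix.mul_apply]
    simp only [Matrix.mul_diagonal, Matrix.star_apply, star_trivial]
  -- main entrywise limit towards Q
  have hmain : ∀ u v : Fin N,
      Filter.Tendsto (fun p : ℝ => exp ((-p) • Lhat) u v) Filter.atTop (nhds (Q u v)) := by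
    intro u v
    have hfun : ∀ p : ℝ, exp ((-p) • Lhat) u v
        = ∑ k, U u k * Real.exp (-p * μ k) * U v k := by
      intro p; rw [hexp p, hentry]
    have hQuv : Q u v = ∑ k, U u k * χ k * U v k := hentry χ u v
    rw [hQuv]
    simp only [hfun]
    apply tendsto_finset_sum
    intro k _
    by_cases h : μ k = 0
    · simp only [h, mul_zero, neg_zero, Real.exp_zero, hχdef, if_pos h]
      exact tendsto_const_nhds
    · have hpos : 0 < μ k := lt_of_le_of_ne (hμ0 k) (Ne.symm h)
      have hb : Filter.Tendsto (fun p : ℝ => -p * μ k) Filter.atTop Filter.atBot :=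
        Filter.tendsto_neg_atTop_atBot.atBot_mul_const hpos
      have h1 : Filter.Tendsto (fun p : ℝ => Real.exp (-p * μ k)) Filter.atTop (nhds 0) :=
        Real.tendsto_exp_atBot.comp hb
      have := (h1.const_mul (U u k)).mul_const (U v k)
      simpa [hχdef, h] using this
  -- Q kills Lhat from the right
  have hdd : Matrix.diagonal μ * Matrix.diagonal χ = 0 := by
    rw [Matrix.diagonal_mul_diagonal]
    have : (fun k => μ k * χ k) = fun _ => (0 : ℝ) := by
      funext k; by_cases h : μ k = 0 <;> simp [hχdef, h]
    rw [this, Matrix.diagonal_zero]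
  have hLQ : Lhat * Q = 0 := by
    rw [hspec, hQdef]
    simp only [Matrix.mul_assoc]
    rw [← Matrix.mul_assoc (star U) U, hUU, Matrix.one_mul,
      ← Matrix.mul_assoc (Matrix.diagonal μ) (Matrix.diagonal χ), hdd,
      Matrix.zero_mul, Matrix.mul_zero]
  -- Q acts as identity on the kernel
  have hQy : ∀ y : Fin N → ℝ, Lhat *ᵥ y = 0 → Q *ᵥ y = y := by
    intro y hy
    have hz : ∀ k, μ k * (star U *ᵥ y) k = 0 := by
      intro k
      have h1 : (Matrix.diagonal μ * star U) *ᵥ y = 0 := by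
        have h2 := congrArg (fun w => star U *ᵥ w) hy
        simp only [Matrix.mulVec_mulVec, Matrix.mulVec_zero] at h2
        rw [hspec, ← Matrix.mul_assoc, ← Matrix.mul_assoc, hUU, Matrix.one_mul] at h2
        exact h2
      have := congrFun h1 k
      rw [← Matrix.mulVec_mulVec] at this
      simpa [Matrix.mulVec_diagonal] using this
    have hχz : Matrix.diagonal χ *ᵥ (star U *ᵥ y) = star U *ᵥ y := by
      funext k
      rw [Matrix.mulVec_diagonal]
      by_cases h : μ k = 0
      · simp [hχdef, h]
      · have : (star U *ᵥ y) k = 0 := by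
          have := hz k
          exact (mul_eq_zero.mp this).resolve_left h
        simp [hχdef, h, this]
    calc Q *ᵥ y = U *ᵥ (Matrix.diagonal χ *ᵥ (star U *ᵥ y)) := by
          rw [hQdef]; simp [Matrix.mulVec_mulVec, Matrix.mul_assoc]
      _ = U *ᵥ (star U *ᵥ y) := by rw [hχz]
      _ = y := by rw [Matrix.mulVec_mulVec, hUU', Matrix.one_mulVec]
  -- Q is symmetric
  have hQH : Q.IsHermitian := by
    rw [hQdef]
    have : star U = Uᴴ := rfl
    rw [this]
    exact Matrix.isHermitian_mul_mul_conjTranspose U (Matrix.isHermitian_diagonal_iff.mpr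
      (fun k => IsSelfAdjoint.all _))
  -- identify the limit matrix with the projection matrix
  have hproj : (Matrix.toEuclideanLin.symm
      (((LinearMap.ker (Matrix.toEuclideanLin Lhat)).subtypeL.comp
        (Submodule.orthogonalProjectionOnto
          (LinearMap.ker (Matrix.toEuclideanLin Lhat)))).toLinearMap)) = Q := by
    rw [LinearEquiv.symm_apply_eq]
    apply LinearMap.ext
    intro x
    show ((Submodule.orthogonalProjectionOnto (LinearMap.ker (Matrix.toEuclideanLin Lhat)) x :
        EuclideanSpace ℝ (Fin N))) = Matrix.toEuclideanLin Q x
    refine Submodule.eq_starProjection_of_mem_orthogonal ?_ ?_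
    · -- membership in the kernel
      rw [LinearMap.mem_ker]
      apply (WithLp.equiv 2 (Fin N → ℝ)).injective
      have : (WithLp.equiv 2 (Fin N → ℝ))
          (Matrix.toEuclideanLin Lhat (Matrix.toEuclideanLin Q x))
          = Lhat *ᵥ (Q *ᵥ (WithLp.equiv 2 (Fin N → ℝ) x)) := rfl
      rw [this, Matrix.mulVec_mulVec, hLQ, Matrix.zero_mulVec]
      simp
    · rw [Submodule.mem_orthogonal]
      intro y hy
      have hy' : Lhat *ᵥ (WithLp.equiv 2 (Fin N → ℝ) y) = 0 := by
        rw [LinearMap.mem_ker] at hy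
        have := congrArg (WithLp.equiv 2 (Fin N → ℝ)) hy
        simpa using this
      have hQyy := hQy _ hy'
      rw [PiLp.inner_apply]
      have hxq : ∀ i, (x - Matrix.toEuclideanLin Q x) i
          = x i - (Q *ᵥ (WithLp.equiv 2 (Fin N → ℝ) x)) i := fun i => rfl
      simp only [hxq, RCLike.inner_apply, starRingEnd_apply, star_trivial]
      have : ∑ i, y i * (x i - (Q *ᵥ (WithLp.equiv 2 (Fin N → ℝ) x)) i)
          = (fun i => y i) ⬝ᵥ (fun i => x i)
            - (fun i => y i) ⬝ᵥ (Q *ᵥ (WithLp.equiv 2 (Fin N → ℝ) x)) := by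
        simp [dotProduct, mul_sub, Finset.sum_sub_distrib]
      simp only [mul_comm _ (WithLp.ofLp y _)]
      rw [this]
      have hvm : (fun i => y i) ᵥ* Q = fun i => y i := by
        have ht : Qᵀ = Q := hQH
        rw [show Q = Qᵀ from ht.symm, Matrix.vecMul_transpose]
        exact hQyy
      rw [Matrix.dotProduct_mulVec, hvm]
      have hx : (WithLp.equiv 2 (Fin N → ℝ) x) = fun i => x i := rfl
      rw [hx, sub_self]
  rw [hproj]
  exact ⟨hmain, fun u v => ⟨Q u v, hmain u v⟩⟩
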